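/- Let f, g : ℝⁿ → ℝ with f differentiable, convex, and β-smooth (β > 0), both gradients bounded in norm by G > 0, and suppose the inner product ⟨∇f(θ), ∇g(θ)⟩ > ε > 0 at a point θ. Then with step size η* = ⟨∇f(θ), ∇g(θ)⟩ / (β‖∇g(θ)‖²), we have f(θ - η*∇g(θ)) ≤ f(θ) - ε²/(2βG²). -/

import Mathlib

open scoped RealInnerProductSpace
open intervalIntegral

lemma descent {n : ℕ} (f : EuclideanSpace ℝ (Fin n) → ℝ) (β : ℝ) (hβ : 0 < β)
    (hdiff : Differentiable ℝ f)
    (hsmooth : ∀ x y : EuclideanSpace ℝ (Fin n),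
      ‖gradient f x - gradient f y‖ ≤ β * ‖x - y‖)
    (x v : EuclideanSpace ℝ (Fin n)) :
    f (x + v) ≤ f x + ⟪gradient f x, v⟫ + β / 2 * ‖v‖ ^ 2 := by
  set φ' : ℝ → ℝ := fun t => ⟪gradient f (x + t • v), v⟫ with hφ'
  have hgradcont : Continuous fun z : EuclideanSpace ℝ (Fin n) => gradient f z := by
    apply (LipschitzWith.of_dist_le_mul (K := ⟨β, hβ.le⟩) ?_).continuous
    intro a b
    rw [dist_eq_norm, dist_eq_norm]; exact hsmooth a b
  have hcont : Continuous φ' := by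
    exact (hgradcont.comp (by continuity)).inner continuous_const
  have hderiv : ∀ t ∈ Set.uIcc (0:ℝ) 1,
      HasDerivAt (fun t => f (x + t • v)) (φ' t) t := by
    intro t _
    have h1 : HasFDerivAt f (InnerProductSpace.toDual ℝ _ (gradient f (x + t • v))) (x + t • v) :=
      ((hdiff _).hasGradientAt).hasFDerivAt
    have h2 : HasDerivAt (fun t : ℝ => x + t • v) v t := by
      simpa using ((hasDerivAt_id t).smul_const v).const_add x
    exact h1.comp_hasDerivAt t h2
  have key : f (x + v) - f x = ∫ t in (0:ℝ)..1, φ' t := by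
    rw [intervalIntegral.integral_eq_sub_of_hasDerivAt hderiv (hcont.intervalIntegrable 0 1)]
    simp
  have hbound : ∀ t ∈ Set.Icc (0:ℝ) 1, φ' t ≤ ⟪gradient f x, v⟫ + β * t * ‖v‖ ^ 2 := by
    intro t ht
    have : φ' t - ⟪gradient f x, v⟫ = ⟪gradient f (x + t • v) - gradient f x, v⟫ := by
      rw [inner_sub_left]
    have hle : ⟪gradient f (x + t • v) - gradient f x, v⟫ ≤ β * t * ‖v‖ ^ 2 := by
      calc ⟪gradient f (x + t • v) - gradient f x, v⟫
          ≤ ‖gradient f (x + t • v) - gradient f x‖ * ‖v‖ := real_inner_le_norm _ _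
        _ ≤ (β * ‖(x + t • v) - x‖) * ‖v‖ := by
            apply mul_le_mul_of_nonneg_right (hsmooth _ _) (norm_nonneg _)
        _ = β * t * ‖v‖ ^ 2 := by
            rw [add_sub_cancel_left, norm_smul]
            simp [abs_of_nonneg ht.1, Real.norm_eq_abs]
            ring
    linarith [this ▸ hle]
  have hint : (∫ t in (0:ℝ)..1, φ' t) ≤ ∫ t in (0:ℝ)..1, (⟪gradient f x, v⟫ + β * t * ‖v‖ ^ 2) := by
    apply intervalIntegral.integral_mono_on (by norm_num) (hcont.intervalIntegrable 0 1)
    · exact ((continuous_const.add ((continuous_const.mul continuous_id).mul continuous_const)).intervalIntegrable 0 1)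
    · exact hbound
  have hval : (∫ t in (0:ℝ)..1, (⟪gradient f x, v⟫ + β * t * ‖v‖ ^ 2))
      = ⟪gradient f x, v⟫ + β / 2 * ‖v‖ ^ 2 := by
    have he : (fun t : ℝ => β * t * ‖v‖ ^ 2) = fun t : ℝ => (β * ‖v‖ ^ 2) * t := by
      ext t; ring
    rw [intervalIntegral.integral_add intervalIntegrable_const
      (by rw [he]; exact ((continuous_const.mul continuous_id).intervalIntegrable 0 1)), he,
      intervalIntegral.integral_const_mul, integral_id]
    simp; ring
  linarith [key ▸ hint, hval ▸ hint]

/-- One step of gradient descent on the auxiliary loss `g` with the exact step size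
`η* = ⟪∇f θ, ∇g θ⟫ / (β ‖∇g θ‖²)` decreases the main task loss `f` by at least `ε²/(2βG²)`. -/
theorem stmt_0 {n : ℕ} (f g : EuclideanSpace ℝ (Fin n) → ℝ) (β G ε : ℝ)
    (hβ : 0 < β) (hG : 0 < G) (hε : 0 < ε)
    (hdiff : Differentiable ℝ f)
    (hconv : ConvexOn ℝ Set.univ f)
    (hsmooth : ∀ x y : EuclideanSpace ℝ (Fin n),
      ‖gradient f x - gradient f y‖ ≤ β * ‖x - y‖)
    (hGf : ∀ x, ‖gradient f x‖ ≤ G)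
    (hGg : ∀ x, ‖gradient g x‖ ≤ G)
    (θ : EuclideanSpace ℝ (Fin n))
    (hip : ⟪gradient f θ, gradient g θ⟫ > ε) :
    f (θ - (⟪gradient f θ, gradient g θ⟫ / (β * ‖gradient g θ‖ ^ 2)) • gradient g θ)
      ≤ f θ - ε ^ 2 / (2 * β * G ^ 2) := by
  set c : ℝ := ⟪gradient f θ, gradient g θ⟫ with hc
  set d : ℝ := ‖gradient g θ‖ with hd
  have hcpos : 0 < c := hε.trans hip
  have hdpos : 0 < d := by
    by_contra h
    push_neg at h
    have : d = 0 := le_antisymm h (norm_nonneg _)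
    have hcs := real_inner_le_norm (gradient f θ) (gradient g θ)
    rw [← hc, ← hd, this, mul_zero] at hcs
    linarith
  set s : ℝ := c / (β * d ^ 2) with hs
  have hkey := descent f β hβ hdiff hsmooth θ ((-s) • gradient g θ)
  have hrw : θ - s • gradient g θ = θ + (-s) • gradient g θ := by
    rw [neg_smul, sub_eq_add_neg]
  have hinner : ⟪gradient f θ, (-s) • gradient g θ⟫ = -s * c := by
    rw [real_inner_smul_right]
  have hnorm : ‖(-s) • gradient g θ‖ ^ 2 = s ^ 2 * d ^ 2 := by
    rw [norm_smul]; simp [Real.norm_eq_abs, mul_pow, sq_abs]; exact Or.inl rfl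
  rw [hrw]
  rw [hinner, hnorm] at hkey
  have heq : f θ + -s * c + β / 2 * (s ^ 2 * d ^ 2) = f θ - c ^ 2 / (2 * β * d ^ 2) := by
    rw [hs]; field_simp; ring
  have hle : ε ^ 2 / (2 * β * G ^ 2) ≤ c ^ 2 / (2 * β * d ^ 2) := by
    apply div_le_div₀ (by positivity) ?_ (by positivity) ?_
    · nlinarith
    · have hdG : d ≤ G := hd ▸ hGg θ
      exact mul_le_mul_of_nonneg_left (pow_le_pow_left₀ hdpos.le hdG 2) (by positivity)
  linarith [heq ▸ hkey]
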